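/- Let μ : ℕ → Σ be an infinite periodic word over a finite alphabet with period p > 0 (i.e., μ(i) = μ(i+p) for all i). Then every bound of the factor-closed class Fac(μ) of finite words has length at most p. -/

import Mathlib

-- key shift lemma
lemma shift_lemma {A : Type*} (μ : ℕ → A) (p : ℕ) (hp : 0 < p)
    (hper : ∀ i : ℕ, μ (i + p) = μ i) (a b : ℕ)
    (h : ∀ t : ℕ, t < p - 1 → μ (a + t) = μ (b + t)) :
    ∀ k : ℕ, μ (a + k) = μ (b + k) := by
  haveI : NeZero p := ⟨hp.ne'⟩
  have hmul : ∀ r q : ℕ, μ (r + q * p) = μ r := by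
    intro r q
    induction q with
    | zero => simp
    | succ q ih => rw [Nat.succ_mul, ← Nat.add_assoc, hper, ih]
  set g : ZMod p → A := fun x => μ x.val with hg
  have hgk : ∀ k : ℕ, μ k = g ((k : ZMod p)) := by
    intro k
    simp only [hg, ZMod.val_natCast]
    conv_lhs => rw [← Nat.mod_add_div' k p, hmul]
  set d : ZMod p := (b : ZMod p) - (a : ZMod p) with hd
  -- hypothesis in ZMod form
  have h' : ∀ t : ℕ, t < p - 1 → g ((a : ZMod p) + t) = g ((a : ZMod p) + t + d) := by
    intro t ht
    have h1 := h t ht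
    rw [hgk (a+t), hgk (b+t)] at h1
    push_cast at h1
    rw [h1]; congr 1; rw [hd]; ring
  set m : ZMod p := (a : ZMod p) - 1 with hm
  have hne : ∀ y : ZMod p, y ≠ m → g y = g (y + d) := by
    intro y hy
    have hval : ((y - (a : ZMod p)).val : ZMod p) = y - (a : ZMod p) := by
      simp [ZMod.natCast_val, ZMod.cast_id]
    have hvlt : (y - (a : ZMod p)).val < p := ZMod.val_lt _
    have hvne : (y - (a : ZMod p)).val ≠ p - 1 := by
      intro hc
      apply hy
      have : ((p - 1 : ℕ) : ZMod p) = -1 := by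
        push_cast [Nat.cast_sub hp]
        simp
      rw [hm]
      have := hval
      rw [hc] at this
      rw [‹((p-1:ℕ):ZMod p) = -1›] at this
      linear_combination -this
    have := h' (y - (a:ZMod p)).val (by omega)
    rwa [hval, add_sub_cancel] at this
  have hkey : ∀ k : ℕ, g (m + d) = g m ∨ g (m + d) = g (m + (k+1) • d) := by
    intro k
    induction k with
    | zero => right; simp
    | succ k ih =>
      rcases ih with h1 | h1
      · left; exact h1
      · by_cases hc : m + (k+1) • d = m
        · left; rw [h1, hc]
        · right
          rw [h1, hne _ hc]
          congr 1
          rw [succ_nsmul]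
          ring
  have hmd : g m = g (m + d) := by
    rcases hkey (p - 1) with h1 | h1
    · exact h1.symm
    · have hps : (p - 1 + 1) = p := by omega
      rw [hps] at h1
      have : (p : ℕ) • d = 0 := by
        simp [nsmul_eq_mul, ZMod.natCast_self]
      rw [this, add_zero] at h1
      exact h1.symm
  have hall : ∀ y : ZMod p, g y = g (y + d) := by
    intro y
    by_cases hy : y = m
    · rw [hy]; exact hmd
    · exact hne y hy
  intro k
  rw [hgk (a+k), hgk (b+k)]
  push_cast
  have := hall ((a : ZMod p) + k)
  rw [this]
  congr 1
  rw [hd]; ring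



/-- The set of finite factors of the infinite word `u : ℕ → A`. -/
def FacN {A : Type*} (u : ℕ → A) : Set (List A) :=
  {v | ∃ i : ℕ, v = (List.range v.length).map fun k => u (i + k)}

/-- A bound of a factor-closed class `C` of finite words: a word not in `C` all of whose
proper factors belong to `C`. -/
def IsBound {A : Type*} (C : Set (List A)) (v : List A) : Prop :=
  v ∉ C ∧ ∀ w : List A, w <:+: v → w ≠ v → w ∈ C

theorem stmt1 {A : Type*} [Finite A] (μ : ℕ → A) (p : ℕ) (hp : 0 < p)
    (hper : ∀ i : ℕ, μ (i + p) = μ i) (v : List A) (hv : IsBound (FacN μ) v) :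
    v.length ≤ p := by
  by_contra hle
  push_neg at hle
  obtain ⟨hnot, hfac⟩ := hv
  set n := v.length with hn
  have hn2 : 2 ≤ n := by omega
  have h1 : v.dropLast ∈ FacN μ := by
    apply hfac _ (List.dropLast_prefix v).isInfix
    intro h
    have := congrArg List.length h
    rw [List.length_dropLast] at this
    omega
  have h2 : v.tail ∈ FacN μ := by
    apply hfac _ (List.tail_suffix v).isInfix
    intro h
    have := congrArg List.length h
    rw [List.length_tail] at this
    omega
  obtain ⟨i, hi⟩ := h1
  obtain ⟨j, hj⟩ := h2
  have hi' : ∀ t : ℕ, (ht : t < n - 1) → v[t]'(by omega) = μ (i + t) := by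
    intro t ht
    have hlen : t < v.dropLast.length := by rw [List.length_dropLast]; omega
    have h3 : v.dropLast[t]'hlen = μ (i + t) := by
      rw [List.getElem_of_eq hi]
      simp
    rw [List.getElem_dropLast] at h3
    exact h3
  have hj' : ∀ t : ℕ, (ht : t < n - 1) → v[t+1]'(by omega) = μ (j + t) := by
    intro t ht
    have hlen : t < v.tail.length := by rw [List.length_tail]; omega
    have h3 : v.tail[t]'hlen = μ (j + t) := by
      rw [List.getElem_of_eq hj]
      simp
    rw [List.getElem_tail] at h3
    exact h3
  have hov : ∀ t : ℕ, t < p - 1 → μ (i + 1 + t) = μ (j + t) := by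
    intro t ht
    have h4 := hi' (t+1) (by omega)
    have h5 := hj' t (by omega)
    rw [show i + (t+1) = i + 1 + t by ring] at h4
    rw [← h4, ← h5]
  have hsh := shift_lemma μ p hp hper (i+1) j hov
  apply hnot
  refine ⟨i, ?_⟩
  apply List.ext_getElem
  · simp
  · intro t ht1 ht2
    simp only [List.getElem_map, List.getElem_range]
    by_cases hc : t < n - 1
    · exact hi' t hc
    · have hteq : t = n - 1 := by omega
      subst hteq
      have h6 := hj' (n-2) (by omega)
      have h7 := hsh (n-2)
      rw [show i + 1 + (n-2) = i + (n-1) by omega] at h7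
      rw [h7]
      rw [← h6]
      congr 1
      omega
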